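/- In the block construction, for every x ∈ [n] ∖ T, the abundance of x satisfies γ_x = (1/m) · Σ_{j=1}^{m} j · p_j, where p_j = N_j/|F| is the probability that a uniformly random member of F contains exactly j blocks. -/

import Mathlib

open Finset

/-- A family of finite sets is union-closed if it contains the union of any two of
its members. -/
def UnionClosed {α : Type*} [DecidableEq α] (F : Finset (Finset α)) : Prop :=
  ∀ A ∈ F, ∀ B ∈ F, A ∪ B ∈ F

/-- The abundance of `x` with respect to a family `F`. -/
noncomputable def abundance {α : Type*} [DecidableEq α] (F : Finset (Finset α)) (x : α) : ℝ :=
  ((F.filter (fun A => x ∈ A)).card : ℝ) / (F.card : ℝ)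

/-- The average overlap density of `F`. -/
noncomputable def AOD {α : Type*} [DecidableEq α] (F : Finset (Finset α)) : ℝ :=
  (1 / (((F.erase ∅).card : ℝ))) *
    ∑ A ∈ F.erase ∅, (1 / (A.card : ℝ)) * ∑ x ∈ A, abundance F x

/-- The union-closed family generated by `G = {B i ∪ {j} : i, j ∈ T}`:
all unions of nonempty subcollections of `G`. -/
def blockFamily {n m : ℕ} (B : Fin m → Finset (Fin n)) (T : Finset (Fin n)) :
    Finset (Finset (Fin n)) :=
  ((((univ : Finset (Fin m)) ×ˢ T).image (fun p => B p.1 ∪ {p.2})).powerset.filter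
      (fun C => C.Nonempty)).image (fun C => C.sup id)

section Block
variable {n m : ℕ} (B : Fin m → Finset (Fin n)) (T : Fin m → Finset (Fin n))

/-- blocks of a set -/
def blks (A : Finset (Fin n)) : Finset (Fin m) := univ.filter (fun i => B i ⊆ A)

/-- union of blocks in S -/
def bigB (S : Finset (Fin m)) : Finset (Fin n) := S.biUnion B

lemma mem_decomp (A : Finset (Fin n)) (hA : A ∈ blockFamily B (univ.biUnion T)) :
    (blks B A).Nonempty ∧ A = bigB B (blks B A) ∪ (A ∩ univ.biUnion T) := by
  simp only [blockFamily, mem_image, mem_filter, mem_powerset] at hA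
  obtain ⟨C, ⟨hCsub, hCne⟩, rfl⟩ := hA
  have hgen : ∀ c ∈ C, ∃ i : Fin m, ∃ t, t ∈ univ.biUnion T ∧ c = B i ∪ {t} := by
    intro c hc
    obtain ⟨p, hp, rfl⟩ := mem_image.mp (hCsub hc)
    exact ⟨p.1, p.2, (mem_product.mp hp).2, rfl⟩
  have hsub : ∀ c ∈ C, c ⊆ C.sup id := fun c hc => Finset.le_sup (f := id) hc
  constructor
  · obtain ⟨c, hc⟩ := hCne
    obtain ⟨i, t, ht, rfl⟩ := hgen c hc
    exact ⟨i, by simp [blks]; exact (Finset.subset_union_left).trans (hsub _ hc)⟩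
  · apply Finset.Subset.antisymm
    · intro x hx
      obtain ⟨c, hc, hxc⟩ := Finset.mem_sup.mp hx
      obtain ⟨i, t, ht, rfl⟩ := hgen c hc
      rcases Finset.mem_union.mp hxc with h | h
      · apply Finset.mem_union_left
        refine Finset.mem_biUnion.mpr ⟨i, ?_, h⟩
        simp [blks]
        exact (Finset.subset_union_left).trans (hsub _ hc)
      · rw [mem_singleton] at h
        subst h
        exact Finset.mem_union_right _ (Finset.mem_inter.mpr ⟨hx, ht⟩)
    · apply Finset.union_subset
      · intro x hx
        obtain ⟨i, hi, hxi⟩ := Finset.mem_biUnion.mp hx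
        exact (mem_filter.mp hi).2 hxi
      · exact Finset.inter_subset_left

lemma decomp_mem (hT : ∀ i, T i ⊆ B i) (hsne : ∀ i, (T i).Nonempty)
    (S : Finset (Fin m)) (hS : S.Nonempty)
    (U : Finset (Fin n)) (hU : U ⊆ univ.biUnion T) :
    bigB B S ∪ U ∈ blockFamily B (univ.biUnion T) := by
  obtain ⟨i₀, hi₀⟩ := hS
  classical
  set P : Finset (Fin m × Fin n) :=
    (S.image fun i => (i, (hsne i).choose)) ∪ (U.image fun u => (i₀, u)) with hP
  have hPsub : P ⊆ univ ×ˢ univ.biUnion T := by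
    intro p hp
    rw [hP, Finset.mem_union] at hp
    rcases hp with hp | hp
    · obtain ⟨i, hi, rfl⟩ := mem_image.mp hp
      exact mem_product.mpr ⟨mem_univ _, mem_biUnion.mpr ⟨i, mem_univ _, (hsne i).choose_spec⟩⟩
    · obtain ⟨u, hu, rfl⟩ := mem_image.mp hp
      exact mem_product.mpr ⟨mem_univ _, hU hu⟩
  refine mem_image.mpr ⟨P.image (fun p => B p.1 ∪ {p.2}), ?_, ?_⟩
  · refine mem_filter.mpr ⟨mem_powerset.mpr (image_subset_image hPsub), ?_⟩
    have hPne : P.Nonempty := ⟨(i₀, (hsne i₀).choose), by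
      rw [hP]; exact mem_union_left _ (mem_image_of_mem _ hi₀)⟩
    exact hPne.image _
  · rw [Finset.sup_image]
    ext x
    simp only [Finset.mem_sup, Function.comp, id_eq, Finset.mem_union, hP, Finset.mem_image,
      mem_singleton, bigB, mem_biUnion]
    constructor
    · rintro ⟨p, hp, hx⟩
      rcases hp with ⟨i, hi, rfl⟩ | ⟨u, hu, rfl⟩
      · rcases hx with hx | rfl
        · exact Or.inl ⟨i, hi, hx⟩
        · exact Or.inl ⟨i, hi, hT i (hsne i).choose_spec⟩
      · rcases hx with hx | rfl
        · exact Or.inl ⟨i₀, hi₀, hx⟩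
        · exact Or.inr hu
    · rintro (⟨i, hi, hx⟩ | hx)
      · exact ⟨(i, (hsne i).choose), Or.inl ⟨i, hi, rfl⟩, Or.inl hx⟩
      · exact ⟨(i₀, x), Or.inr ⟨x, hx, rfl⟩, Or.inr rfl⟩

lemma blks_decomp {k s : ℕ} (hsk : s + 2 ≤ k)
    (hBcard : ∀ i, (B i).card = k)
    (hBdisj : ∀ i j : Fin m, i ≠ j → Disjoint (B i) (B j))
    (hT : ∀ i, T i ⊆ B i) (hTcard : ∀ i, (T i).card = s)
    (S : Finset (Fin m)) (U : Finset (Fin n)) (hU : U ⊆ univ.biUnion T) :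
    blks B (bigB B S ∪ U) = S := by
  ext i
  simp only [blks, mem_filter, mem_univ, true_and]
  constructor
  · intro hBi
    by_contra hiS
    have hTi : B i ⊆ T i := by
      intro x hx
      rcases Finset.mem_union.mp (hBi hx) with h | h
      · obtain ⟨j, hj, hxj⟩ := Finset.mem_biUnion.mp h
        exact absurd hxj (Finset.disjoint_left.mp (hBdisj i j (fun e => hiS (e ▸ hj))) hx)
      · obtain ⟨j, _, hxj⟩ := Finset.mem_biUnion.mp (hU h)
        by_cases hij : j = i
        · exact hij ▸ hxj
        · exact absurd (hT j hxj) (Finset.disjoint_left.mp (hBdisj i j (fun e => hij e.symm)) hx)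
    have := Finset.card_le_card hTi
    rw [hBcard i, hTcard i] at this
    omega
  · intro hiS
    exact (Finset.subset_biUnion_of_mem B hiS).trans Finset.subset_union_left

lemma card_bigT_sdiff {s : ℕ}
    (hBdisj : ∀ i j : Fin m, i ≠ j → Disjoint (B i) (B j))
    (hT : ∀ i, T i ⊆ B i) (hTcard : ∀ i, (T i).card = s)
    (S : Finset (Fin m)) :
    ((univ.biUnion T) \ bigB B S).card = s * (m - S.card) := by
  have hTdisj : ∀ i j : Fin m, i ≠ j → Disjoint (T i) (T j) := fun i j hij =>
    (hBdisj i j hij).mono (hT i) (hT j)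
  have heq : (univ.biUnion T) \ bigB B S = (univ \ S).biUnion T := by
    ext x
    simp only [Finset.mem_sdiff, mem_biUnion, mem_univ, true_and, bigB]
    constructor
    · rintro ⟨⟨i, hxi⟩, hnx⟩
      refine ⟨i, fun hiS => hnx ⟨i, hiS, hT i hxi⟩, hxi⟩
    · rintro ⟨i, hiS, hxi⟩
      refine ⟨⟨i, hxi⟩, fun ⟨j, hjS, hxj⟩ => ?_⟩
      by_cases hij : i = j
      · exact hiS (hij ▸ hjS)
      · exact absurd hxj (Finset.disjoint_left.mp (hBdisj i j hij) (hT i hxi))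
  rw [heq, Finset.card_biUnion (fun i _ j _ hij => hTdisj i j hij)]
  rw [Finset.sum_congr rfl (fun i _ => hTcard i), Finset.sum_const, smul_eq_mul,
    Finset.card_sdiff_of_subset (Finset.subset_univ S), Finset.card_univ, Fintype.card_fin, mul_comm]

lemma fiber_card {k s : ℕ} (hsk : s + 2 ≤ k) (hsne : ∀ i, (T i).Nonempty)
    (hBcard : ∀ i, (B i).card = k)
    (hBdisj : ∀ i j : Fin m, i ≠ j → Disjoint (B i) (B j))
    (hT : ∀ i, T i ⊆ B i) (hTcard : ∀ i, (T i).card = s)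
    (S : Finset (Fin m)) (hS : S.Nonempty) :
    ((blockFamily B (univ.biUnion T)).filter (fun A => blks B A = S)).card
      = 2 ^ (s * (m - S.card)) := by
  classical
  have heq : (blockFamily B (univ.biUnion T)).filter (fun A => blks B A = S)
      = ((univ.biUnion T) \ bigB B S).powerset.image (fun U => bigB B S ∪ U) := by
    ext A
    simp only [mem_filter, mem_image, mem_powerset]
    constructor
    · rintro ⟨hA, hblk⟩
      obtain ⟨-, hdec⟩ := mem_decomp B T A hA
      refine ⟨(A ∩ univ.biUnion T) \ bigB B S,
        Finset.sdiff_subset_sdiff Finset.inter_subset_right (Finset.Subset.refl _), ?_⟩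
      rw [Finset.union_sdiff_self_eq_union, ← hblk, ← hdec]
    · rintro ⟨U, hU, rfl⟩
      have hU' : U ⊆ univ.biUnion T := hU.trans (Finset.sdiff_subset)
      exact ⟨decomp_mem B T hT hsne S hS U hU',
        blks_decomp B T hsk hBcard hBdisj hT hTcard S U hU'⟩
  rw [heq, Finset.card_image_of_injOn, Finset.card_powerset,
    card_bigT_sdiff B T hBdisj hT hTcard S]
  intro U1 hU1 U2 hU2 hUe
  rw [mem_coe, mem_powerset] at hU1 hU2
  have d1 : Disjoint (bigB B S) U1 := Finset.disjoint_right.mpr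
    (fun a ha => (Finset.mem_sdiff.mp (hU1 ha)).2)
  have d2 : Disjoint (bigB B S) U2 := Finset.disjoint_right.mpr
    (fun a ha => (Finset.mem_sdiff.mp (hU2 ha)).2)
  have hUe' : bigB B S ∪ U1 = bigB B S ∪ U2 := hUe
  rw [← Finset.union_sdiff_cancel_left d1, hUe', Finset.union_sdiff_cancel_left d2]

lemma master {k s : ℕ} (hsk : s + 2 ≤ k) (hsne : ∀ i, (T i).Nonempty)
    (hBcard : ∀ i, (B i).card = k)
    (hBdisj : ∀ i j : Fin m, i ≠ j → Disjoint (B i) (B j))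
    (hT : ∀ i, T i ⊆ B i) (hTcard : ∀ i, (T i).card = s)
    (q : Finset (Fin m) → Prop) [DecidablePred q] :
    ((blockFamily B (univ.biUnion T)).filter (fun A => q (blks B A))).card
      = ∑ S ∈ univ.powerset.filter (fun S : Finset (Fin m) => S.Nonempty ∧ q S),
          2 ^ (s * (m - S.card)) := by
  classical
  rw [Finset.card_eq_sum_card_fiberwise (f := blks B)
    (t := univ.powerset.filter (fun S : Finset (Fin m) => S.Nonempty ∧ q S))
    (fun A hA => by
      rcases mem_filter.mp hA with ⟨hAF, hq⟩
      exact mem_filter.mpr ⟨mem_powerset.mpr (Finset.subset_univ _),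
        (mem_decomp B T A hAF).1, hq⟩)]
  refine Finset.sum_congr rfl (fun S hS => ?_)
  rcases mem_filter.mp hS with ⟨-, hSne, hqS⟩
  rw [Finset.filter_filter]
  have : ∀ A, (q (blks B A) ∧ blks B A = S) ↔ blks B A = S := by
    intro A
    constructor
    · exact And.right
    · intro h; exact ⟨h ▸ hqS, h⟩
  rw [Finset.filter_congr (fun A _ => this A),
    fiber_card B T hsk hsne hBcard hBdisj hT hTcard S hSne]

end Block

section Count
variable {m s : ℕ}

lemma sum_swap_sym (i i0 : Fin m) :
    ∑ S ∈ univ.powerset.filter (fun S : Finset (Fin m) => S.Nonempty ∧ i ∈ S),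
        2 ^ (s * (m - S.card))
      = ∑ S ∈ univ.powerset.filter (fun S : Finset (Fin m) => S.Nonempty ∧ i0 ∈ S),
          2 ^ (s * (m - S.card)) := by
  classical
  refine Finset.sum_nbij' (fun S => S.image (Equiv.swap i i0))
    (fun S => S.image (Equiv.swap i i0)) ?_ ?_ ?_ ?_ ?_
  · intro S hS
    rcases mem_filter.mp hS with ⟨-, hne, hiS⟩
    exact mem_filter.mpr ⟨mem_powerset.mpr (subset_univ _), hne.image _,
      mem_image.mpr ⟨i, hiS, Equiv.swap_apply_left i i0⟩⟩
  · intro S hS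
    rcases mem_filter.mp hS with ⟨-, hne, hiS⟩
    exact mem_filter.mpr ⟨mem_powerset.mpr (subset_univ _), hne.image _,
      mem_image.mpr ⟨i0, hiS, Equiv.swap_apply_right i i0⟩⟩
  · intro S _
    rw [Finset.image_image]
    simp [Function.comp_def]
  · intro S _
    rw [Finset.image_image]
    simp [Function.comp_def]
  · intro S _
    rw [Finset.card_image_of_injective _ (Equiv.injective _)]

lemma key_nat (i0 : Fin m) :
    ∑ j ∈ Finset.Icc 1 m, j *
        (∑ S ∈ univ.powerset.filter (fun S : Finset (Fin m) => S.Nonempty ∧ S.card = j),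
          2 ^ (s * (m - S.card)))
      = m * ∑ S ∈ univ.powerset.filter (fun S : Finset (Fin m) => S.Nonempty ∧ i0 ∈ S),
          2 ^ (s * (m - S.card)) := by
  classical
  set P := univ.powerset.filter (fun S : Finset (Fin m) => S.Nonempty) with hP
  have h1 : ∀ j, univ.powerset.filter (fun S : Finset (Fin m) => S.Nonempty ∧ S.card = j)
      = P.filter (fun S => S.card = j) := by
    intro j; rw [hP, Finset.filter_filter]
  have h2 : univ.powerset.filter (fun S : Finset (Fin m) => S.Nonempty ∧ i0 ∈ S)
      = P.filter (fun S => i0 ∈ S) := by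
    rw [hP, Finset.filter_filter]
  calc ∑ j ∈ Finset.Icc 1 m, j *
        (∑ S ∈ univ.powerset.filter (fun S : Finset (Fin m) => S.Nonempty ∧ S.card = j),
          2 ^ (s * (m - S.card)))
      = ∑ j ∈ Finset.Icc 1 m, ∑ S ∈ P.filter (fun S => S.card = j),
          S.card * 2 ^ (s * (m - S.card)) := by
        refine Finset.sum_congr rfl (fun j _ => ?_)
        rw [h1, Finset.mul_sum]
        exact Finset.sum_congr rfl (fun S hS => by rw [(mem_filter.mp hS).2])
    _ = ∑ S ∈ P, S.card * 2 ^ (s * (m - S.card)) := by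
        refine Finset.sum_fiberwise_of_maps_to (fun S hS => ?_) _
        rcases mem_filter.mp hS with ⟨hpow, hne⟩
        refine Finset.mem_Icc.mpr ⟨Finset.card_pos.mpr hne, ?_⟩
        simpa using Finset.card_le_card (Finset.subset_univ S)
    _ = ∑ S ∈ P, ∑ i ∈ (univ : Finset (Fin m)),
          if i ∈ S then 2 ^ (s * (m - S.card)) else 0 := by
        refine Finset.sum_congr rfl (fun S _ => ?_)
        rw [Finset.sum_ite_mem, Finset.univ_inter, Finset.sum_const, smul_eq_mul]
    _ = ∑ i ∈ (univ : Finset (Fin m)), ∑ S ∈ P.filter (fun S => i ∈ S),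
          2 ^ (s * (m - S.card)) := by
        rw [Finset.sum_comm]
        exact Finset.sum_congr rfl (fun i _ => (Finset.sum_filter _ _).symm)
    _ = ∑ _i ∈ (univ : Finset (Fin m)), ∑ S ∈ P.filter (fun S => i0 ∈ S),
          2 ^ (s * (m - S.card)) := by
        refine Finset.sum_congr rfl (fun i _ => ?_)
        rw [show P.filter (fun S => i ∈ S)
            = univ.powerset.filter (fun S : Finset (Fin m) => S.Nonempty ∧ i ∈ S) from
          (by rw [hP, Finset.filter_filter]), h2.symm]
        exact sum_swap_sym i i0
    _ = m * ∑ S ∈ univ.powerset.filter (fun S : Finset (Fin m) => S.Nonempty ∧ i0 ∈ S),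
          2 ^ (s * (m - S.card)) := by
        rw [Finset.sum_const, smul_eq_mul, Finset.card_univ, Fintype.card_fin, h2]

end Count

/-- In the block construction, for every `x ∈ [n] ∖ T` the abundance of `x`
equals `(1/m) · Σ_{j=1}^{m} j · p_j`. -/
theorem blockFamily_abundance_outside_T
    (k m s : ℕ) (hk : 0 < k) (hm : 2 ≤ m) (hs : 0 < s) (hsk : s + 2 ≤ k)
    (B : Fin m → Finset (Fin (k * m)))
    (hBcard : ∀ i, (B i).card = k)
    (hBdisj : ∀ i j : Fin m, i ≠ j → Disjoint (B i) (B j))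
    (hBcover : (Finset.univ : Finset (Fin m)).biUnion B = (Finset.univ : Finset (Fin (k * m))))
    (T : Fin m → Finset (Fin (k * m)))
    (hT : ∀ i, T i ⊆ B i) (hTcard : ∀ i, (T i).card = s)
    (N : ℕ → ℕ)
    (hN : ∀ j : ℕ, N j = ((blockFamily B ((univ : Finset (Fin m)).biUnion T)).filter
      (fun A => (univ.filter (fun i : Fin m => B i ⊆ A)).card = j)).card)
    (p : ℕ → ℝ)
    (hp : ∀ j : ℕ, p j = (N j : ℝ) / ((blockFamily B ((univ : Finset (Fin m)).biUnion T)).card : ℝ)) :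
    ∀ x : Fin (k * m), x ∉ (univ : Finset (Fin m)).biUnion T →
      abundance (blockFamily B ((univ : Finset (Fin m)).biUnion T)) x
        = (1 / (m : ℝ)) * ∑ j ∈ Finset.Icc 1 m, (j : ℝ) * p j := by
  classical
  intro x hx
  have hsne : ∀ i, (T i).Nonempty := fun i => Finset.card_pos.mp (by rw [hTcard i]; exact hs)
  obtain ⟨i₀, -, hxi₀⟩ : ∃ i ∈ (univ : Finset (Fin m)), x ∈ B i :=
    mem_biUnion.mp (by rw [hBcover]; exact mem_univ x)
  set F := blockFamily B ((univ : Finset (Fin m)).biUnion T) with hF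
  have hxiff : ∀ A ∈ F, x ∈ A ↔ i₀ ∈ blks B A := by
    intro A hA
    constructor
    · intro hxA
      obtain ⟨-, hdec⟩ := mem_decomp B T A hA
      rw [hdec] at hxA
      rcases Finset.mem_union.mp hxA with h | h
      · obtain ⟨j, hj, hxj⟩ := Finset.mem_biUnion.mp h
        by_cases hji : j = i₀
        · exact hji ▸ hj
        · exact absurd hxi₀ (Finset.disjoint_left.mp (hBdisj j i₀ hji) hxj)
      · exact absurd (Finset.mem_inter.mp h).2 hx
    · intro hi
      exact (mem_filter.mp hi).2 hxi₀
  have hnum : (F.filter (fun A => x ∈ A)).card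
      = ∑ S ∈ univ.powerset.filter (fun S : Finset (Fin m) => S.Nonempty ∧ i₀ ∈ S),
          2 ^ (s * (m - S.card)) := by
    rw [Finset.filter_congr hxiff]
    exact master B T hsk hsne hBcard hBdisj hT hTcard (fun S => i₀ ∈ S)
  have hNj : ∀ j, N j = ∑ S ∈ univ.powerset.filter
      (fun S : Finset (Fin m) => S.Nonempty ∧ S.card = j), 2 ^ (s * (m - S.card)) := by
    intro j
    rw [hN j]
    exact master B T hsk hsne hBcard hBdisj hT hTcard (fun S => S.card = j)
  have hkey : ∑ j ∈ Finset.Icc 1 m, j * N j = m * (F.filter (fun A => x ∈ A)).card := by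
    rw [hnum, Finset.sum_congr rfl (fun j _ => by rw [hNj j])]
    exact key_nat i₀
  have hm0 : (m : ℝ) ≠ 0 := Nat.cast_ne_zero.mpr (by omega)
  rw [abundance]
  simp only [hp]
  have hsum : ∑ j ∈ Finset.Icc 1 m, (j : ℝ) * ((N j : ℝ) / (F.card : ℝ))
      = ((∑ j ∈ Finset.Icc 1 m, j * N j : ℕ) : ℝ) / (F.card : ℝ) := by
    push_cast
    rw [Finset.sum_div]
    exact Finset.sum_congr rfl (fun j _ => (mul_div_assoc _ _ _).symm)
  rw [hsum, hkey]
  push_cast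
  rw [mul_div_assoc, ← mul_assoc, one_div_mul_cancel hm0, one_mul]
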